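/- arXiv:math/0606333 — 5 statements merged into one kernel-verified Lean document; each statement's English description precedes it below -/
import Mathlib

section
/- Let M be a unital C*-algebra over ℂ, G an additively written abelian group, α : G → (M ≃⋆ M) a group homomorphism into the *-algebra automorphisms of M, c : G × G → 𝕋 a function with c(0,y) = c(x,0) = 1 for all x, y, and U : G → M a map whose values are unitary elements of M, such that (i) U(x+y) = conj(c(x,y)) • (U(x) * α(x)(U(y))) for all x, y ∈ G, and (ii) any two elements of the family {α(x)(U(y)) : x, y ∈ G} commute. Define β(x)(m) = star(U(x)) * α(x)(m) * U(x) for m ∈ M. Then β(0) is the identity map of M and β(x+y)(m) = β(x)(β(y)(m)) for all x, y ∈ G and m ∈ M; in particular each β(x) is a *-algebra automorphism of M and β is a group action of G on M. -/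
/-- Twisting a group action `α` of an abelian group `G` on a unital C*-algebra `M`
by a family of unitaries `U` coming from a `𝕋`-valued 2-cocycle `c` (with the
values `α x (U y)` pairwise commuting) yields again an action:
`β x m = star (U x) * α x m * U x` satisfies `β 0 = id` and
`β (x + y) = β x ∘ β y`. -/
theorem twisted_action_is_action
    {M : Type*} [NormedRing M] [StarRing M] [CStarRing M] [CompleteSpace M]
    [NormedAlgebra ℂ M] [StarModule ℂ M]
    {G : Type*} [AddCommGroup G]
    (α : G → (M ≃⋆ₐ[ℂ] M))
    (hα0 : ∀ m : M, α 0 m = m)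
    (hαadd : ∀ x y : G, ∀ m : M, α (x + y) m = α x (α y m))
    (c : G → G → ℂ)
    (hcmod : ∀ x y : G, ‖c x y‖ = 1)
    (hc0 : ∀ y : G, c 0 y = 1) (hc0' : ∀ x : G, c x 0 = 1)
    (U : G → M)
    (hU : ∀ x : G, U x ∈ unitary M)
    (hUcoc : ∀ x y : G, U (x + y) = (starRingEnd ℂ) (c x y) • (U x * α x (U y)))
    (hcomm : ∀ x y x' y' : G, Commute (α x (U y)) (α x' (U y')))
    (β : G → M → M)
    (hβ : ∀ (x : G) (m : M), β x m = star (U x) * α x m * U x) :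
    (∀ m : M, β 0 m = m) ∧
      (∀ (x y : G) (m : M), β (x + y) m = β x (β y m)) := by
  have hsU : ∀ z : G, star (U z) * U z = 1 := fun z => (hU z).1
  have hU0 : U 0 = 1 := by
    have h := hUcoc 0 0
    rw [add_zero, hc0, map_one, one_smul, hα0] at h
    calc U 0 = 1 * U 0 := (one_mul _).symm
      _ = (star (U 0) * U 0) * U 0 := by rw [hsU]
      _ = star (U 0) * (U 0 * U 0) := by rw [mul_assoc]
      _ = star (U 0) * U 0 := by rw [← h]
      _ = 1 := hsU 0
  refine ⟨fun m => by rw [hβ, hU0, star_one, one_mul, mul_one, hα0], fun x y m => ?_⟩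
  have hc1 : c x y * (starRingEnd ℂ) (c x y) = 1 := by
    rw [Complex.mul_conj]
    norm_cast
    rw [Complex.normSq_eq_norm_sq, hcmod]
    norm_num
  have hcomm1 : Commute (U x) (α x (U y)) := by
    have := hcomm 0 x x y
    rwa [hα0] at this
  have hstar : Commute (star (α x (U y))) (star (U x)) := hcomm1.star_star.symm
  rw [hβ, hβ, hβ, hUcoc, hαadd, star_smul, star_mul]
  rw [map_mul, map_mul, map_star]
  have hsc : (star ((starRingEnd ℂ) (c x y)) : ℂ) = c x y := Complex.conj_conj _
  rw [hsc]
  rw [smul_mul_assoc, smul_mul_assoc, mul_smul_comm, smul_smul, hc1, one_smul]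
  calc star (α x (U y)) * star (U x) * α x (α y m) * (U x * α x (U y))
      = star (α x (U y)) * star (U x) * α x (α y m) * (α x (U y) * U x) := by
        rw [hcomm1.eq]
    _ = star (α x (U y)) * (star (U x) * (α x (α y m) * (α x (U y) * U x))) := by
        simp only [mul_assoc]
    _ = star (U x) * (star (α x (U y)) * (α x (α y m) * (α x (U y) * U x))) := by
        rw [← mul_assoc, ← mul_assoc, hstar.eq]
        simp only [mul_assoc]
    _ = star (U x) * (star (α x (U y)) * α x (α y m) * α x (U y)) * U x := by
        simp only [mul_assoc]
end

section
/- Let M be a unital C*-algebra over ℂ, G an additively written abelian group, α : G → (M ≃⋆ M) a group homomorphism into the *-algebra automorphisms of M, f : G → 𝕋 a function, and F a unitary element of M such that F commutes with α(x)(F) for every x ∈ G. For x ∈ G set U(x) = conj(f(x)) • (star(F) * α(x)(F)). Then for every a ∈ M satisfying α(x)(a) = a for all x ∈ G, one has star(U(x)) * α(x)(F * a * star(F)) * U(x) = F * a * star(F) for all x ∈ G. -/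
/-- For a trivial 2-cocycle `∂f`, the twisting unitaries have the form
`U x = conj (f x) • (star F * α x F)`, and any element of the form `F * a * star F`
with `a` invariant under `α` is invariant under the twisted action. -/
theorem trivial_cocycle_invariance
    {M : Type*} [NormedRing M] [StarRing M] [CStarRing M] [CompleteSpace M]
    [NormedAlgebra ℂ M] [StarModule ℂ M]
    {G : Type*} [AddCommGroup G]
    (α : G → (M ≃⋆ₐ[ℂ] M))
    (hα0 : ∀ m : M, α 0 m = m)
    (hαadd : ∀ x y : G, ∀ m : M, α (x + y) m = α x (α y m))
    (f : G → ℂ) (hf : ∀ x : G, ‖f x‖ = 1)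
    (F : M) (hF : F ∈ unitary M)
    (hFcomm : ∀ x : G, Commute F (α x F))
    (U : G → M)
    (hU : ∀ x : G, U x = (starRingEnd ℂ) (f x) • (star F * α x F))
    (a : M) (ha : ∀ x : G, α x a = a) :
    ∀ x : G, star (U x) * α x (F * a * star F) * U x = F * a * star F := by
  intro x
  have hfx : f x * (starRingEnd ℂ) (f x) = 1 := by
    rw [Complex.mul_conj]
    norm_cast
    rw [Complex.normSq_eq_norm_sq, hf x]; norm_num
  have hαF1 : star (α x F) * α x F = 1 := by
    rw [← map_star, ← map_mul, (Unitary.mem_iff.mp hF).1, map_one]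
  have hcomm := (hFcomm x).eq
  have hcommstar : star (α x F) * star F = star F * star (α x F) := by
    rw [← star_mul, ← star_mul, hcomm]
  have h1 : star (α x F) * F * α x F = F := by
    rw [mul_assoc, hcomm, ← mul_assoc, hαF1, one_mul]
  have h2 : star (α x F) * star F * α x F = star F := by
    rw [hcommstar, mul_assoc, hαF1, mul_one]
  have key : (star (α x F) * F) * (α x F * a * star (α x F)) * (star F * α x F)
      = F * a * star F := by
    calc (star (α x F) * F) * (α x F * a * star (α x F)) * (star F * α x F)
        = (star (α x F) * F * α x F) * a * (star (α x F) * star F * α x F) := by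
          simp only [mul_assoc]
      _ = F * a * star F := by rw [h1, h2]
  rw [hU, map_mul, map_mul, ha, map_star, star_smul, star_mul, star_star,
    starRingEnd_apply, star_star, ← starRingEnd_apply,
    smul_mul_assoc, smul_mul_assoc, mul_smul_comm, smul_smul, hfx, one_smul, key]
end

section
/- Let G be a locally compact Hausdorff abelian topological group and let I be a closed ideal of the ring C₀(G, ℂ) of continuous complex-valued functions on G vanishing at infinity. Assume I is translation invariant, i.e. for every γ ∈ G and every f ∈ I the translated function x ↦ f(x + γ) belongs to I. If I ≠ C₀(G, ℂ), then I = {0}. -/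
open ZeroAtInfty Filter Topology

private lemma zai_sum_apply {G : Type*} [TopologicalSpace G] {ι : Type*}
    (s : Finset ι) (F : ι → C₀(G, ℂ)) (x : G) :
    (∑ i ∈ s, F i) x = ∑ i ∈ s, F i x := by
  classical
  induction s using Finset.induction with
  | empty => simp
  | insert _ _ h ih => rw [Finset.sum_insert h, Finset.sum_insert h, ← ih]; simp

/-- A closed, translation-invariant, proper ideal of `C₀(G, ℂ)` on a locally compact
Hausdorff abelian topological group `G` is trivial. -/
theorem translation_invariant_proper_closed_ideal_eq_bot
    {G : Type*} [AddCommGroup G] [TopologicalSpace G] [IsTopologicalAddGroup G]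
    [T2Space G] [LocallyCompactSpace G]
    (I : Set C₀(G, ℂ))
    (hclosed : IsClosed I)
    (hzero : (0 : C₀(G, ℂ)) ∈ I)
    (hadd : ∀ f ∈ I, ∀ g ∈ I, f + g ∈ I)
    (hneg : ∀ f ∈ I, -f ∈ I)
    (hmul_left : ∀ f ∈ I, ∀ g : C₀(G, ℂ), g * f ∈ I)
    (hmul_right : ∀ f ∈ I, ∀ g : C₀(G, ℂ), f * g ∈ I)
    (htrans : ∀ γ : G, ∀ f ∈ I,
      f.comp (Homeomorph.addRight γ).toCocompactMap ∈ I)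
    (hproper : I ≠ Set.univ) :
    I = {0} := by
  classical
  by_contra hne
  have hex : ∃ f ∈ I, f ≠ 0 := by
    by_contra hc
    push_neg at hc
    exact hne (Set.eq_singleton_iff_unique_mem.mpr ⟨hzero, hc⟩)
  obtain ⟨f, hfI, hf0⟩ := hex
  obtain ⟨x₀, hx₀⟩ : ∃ x, f x ≠ 0 := by
    by_contra hc; push_neg at hc
    exact hf0 (ZeroAtInftyContinuousMap.ext fun x => by simpa using hc x)
  -- at every point some element of I is nonvanishing
  have key : ∀ y : G, ∃ g ∈ I, g y ≠ 0 := by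
    intro y
    refine ⟨f.comp (Homeomorph.addRight (x₀ - y)).toCocompactMap,
      htrans _ f hfI, ?_⟩
    have h1 : f.comp (Homeomorph.addRight (x₀ - y)).toCocompactMap y
        = f (y + (x₀ - y)) := rfl
    have h2 : y + (x₀ - y) = x₀ := by abel
    rw [h1, h2]; exact hx₀
  choose g0 hg0I hg0ne using key
  -- show I = univ
  refine hproper (Set.eq_univ_iff_forall.mpr fun h => ?_)
  rw [← hclosed.closure_eq, Metric.mem_closure_iff]
  intro ε hε
  have hball : Metric.ball (0 : ℂ) (ε / 2) ∈ 𝓝 (0 : ℂ) :=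
    Metric.ball_mem_nhds _ (by linarith)
  obtain ⟨K, hK, hKs⟩ := Filter.mem_cocompact.mp
    (Filter.mem_map.mp (h.zero_at_infty' hball))
  set S : Set G := (⇑h ⁻¹' Metric.ball (0 : ℂ) (ε / 2))ᶜ with hSdef
  have hSsmall : ∀ x ∉ S, ‖h x‖ < ε / 2 := by
    intro x hx
    have : h x ∈ Metric.ball (0 : ℂ) (ε / 2) := by
      by_contra hc; exact hx hc
    simpa [mem_ball_zero_iff] using this
  have hScompact : IsCompact S := by
    refine hK.of_isClosed_subset
      ((Metric.isOpen_ball.preimage (map_continuous h)).isClosed_compl) ?_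
    intro x hx
    by_contra hxK
    exact hx (hKs hxK)
  by_cases hS : S.Nonempty
  · -- positive case
    have hcov : S ⊆ ⋃ y ∈ S, {x | g0 y x ≠ 0} := by
      intro y hy
      exact Set.mem_biUnion hy (hg0ne y)
    obtain ⟨t, htS, htfin, htcov⟩ := hScompact.elim_finite_subcover_image
      (fun y _ => isOpen_compl_singleton.preimage (map_continuous (g0 y))) hcov
    set T := htfin.toFinset with hTdef
    set g : C₀(G, ℂ) := ∑ y ∈ T, g0 y * star (g0 y) with hgdef
    have hgI : g ∈ I :=
      Finset.sum_induction _ (· ∈ I) (fun a b ha hb => hadd a ha b hb) hzero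
        (fun y _ => hmul_right _ (hg0I y) (star (g0 y)))
    set u : G → ℝ := fun x => ∑ y ∈ T, Complex.normSq (g0 y x) with hudef
    have hgu : ∀ x, g x = (u x : ℂ) := by
      intro x
      rw [hgdef, zai_sum_apply, hudef]
      push_cast
      refine Finset.sum_congr rfl fun y _ => ?_
      simp [Complex.mul_conj]
    have hu_cont : Continuous u :=
      continuous_finset_sum _ fun y _ =>
        Complex.continuous_normSq.comp (map_continuous (g0 y))
    have hu_nonneg : ∀ x, 0 ≤ u x :=
      fun x => Finset.sum_nonneg fun y _ => Complex.normSq_nonneg _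
    have hu_pos : ∀ x ∈ S, 0 < u x := by
      intro x hx
      obtain ⟨y, hy, hyx⟩ := Set.mem_iUnion₂.mp (htcov hx)
      exact Finset.sum_pos' (fun z _ => Complex.normSq_nonneg _)
        ⟨y, htfin.mem_toFinset.mpr hy, Complex.normSq_pos.mpr hyx⟩
    obtain ⟨z, hzS, hz⟩ := hScompact.exists_isMinOn hS hu_cont.continuousOn
    set c : ℝ := u z with hcdef
    have hc : 0 < c := hu_pos z hzS
    have hcmin : ∀ x ∈ S, c ≤ u x := fun x hx => hz hx
    set δ : ℝ := c * ε / (2 * (‖h‖ + 1)) with hδdef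
    have hnorm_nonneg : (0 : ℝ) ≤ ‖h‖ := norm_nonneg _
    have hδ : 0 < δ := by positivity
    have hden : ∀ x, 0 < u x + δ := fun x => by
      have := hu_nonneg x; linarith
    set w : C₀(G, ℂ) :=
      { toFun := fun x => h x * ((u x + δ)⁻¹ : ℝ)
        continuous_toFun := (map_continuous h).mul
          (Complex.continuous_ofReal.comp
            ((hu_cont.add continuous_const).inv₀ fun x => (hden x).ne'))
        zero_at_infty' := by
          have htend : Tendsto (fun x => ‖h x‖ * δ⁻¹) (cocompact G) (𝓝 0) := by
            have := (h.zero_at_infty'.norm).mul_const δ⁻¹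
            simpa using this
          refine squeeze_zero_norm (fun x => ?_) htend
          rw [norm_mul, Complex.norm_real, Real.norm_eq_abs,
            abs_of_pos (inv_pos.mpr (hden x))]
          have hle : (u x + δ)⁻¹ ≤ δ⁻¹ := by
            apply inv_anti₀ hδ
            have := hu_nonneg x; linarith
          exact mul_le_mul_of_nonneg_left hle (norm_nonneg _) } with hwdef
    have hkI : w * g ∈ I := hmul_left g hgI w
    refine ⟨w * g, hkI, ?_⟩
    rw [dist_eq_norm]
    have hbound : ∀ x, ‖h x - (w * g) x‖ ≤ ε / 2 := by
      intro x
      have hwg : (w * g) x = h x * ((u x + δ)⁻¹ : ℝ) * (u x : ℂ) := by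
        rw [ZeroAtInftyContinuousMap.coe_mul]
        show w x * g x = _
        rw [hgu x]; rfl
      have hfactor : h x - (w * g) x = h x * ((δ / (u x + δ) : ℝ) : ℂ) := by
        rw [hwg]
        have hre : (δ / (u x + δ) : ℝ) = 1 - (u x + δ)⁻¹ * u x := by
          rw [inv_mul_eq_div, eq_sub_iff_add_eq, ← add_div, add_comm,
            div_self (hden x).ne']
        have : ((δ / (u x + δ) : ℝ) : ℂ)
            = 1 - ((u x + δ)⁻¹ : ℝ) * (u x : ℂ) := by
          rw [hre]; push_cast; ring
        rw [this]; ring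
      rw [hfactor, norm_mul, Complex.norm_real, Real.norm_eq_abs,
        abs_of_pos (div_pos hδ (hden x))]
      by_cases hxS : x ∈ S
      · have h1 : ‖h x‖ ≤ ‖h‖ := by
          rw [← ZeroAtInftyContinuousMap.norm_toBCF_eq_norm]
          exact h.toBCF.norm_coe_le_norm x
        have h2 : δ / (u x + δ) ≤ δ / c := by
          apply div_le_div_of_nonneg_left hδ.le hc
          have := hcmin x hxS; linarith
        have h3 : δ / c = ε / (2 * (‖h‖ + 1)) := by
          rw [hδdef]; field_simp
        calc ‖h x‖ * (δ / (u x + δ)) ≤ ‖h‖ * (δ / c) :=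
              mul_le_mul h1 h2 (div_nonneg hδ.le (hden x).le) hnorm_nonneg
          _ = ‖h‖ * (ε / (2 * (‖h‖ + 1))) := by rw [h3]
          _ ≤ ε / 2 := by
              rw [mul_div_assoc',
                div_le_div_iff₀ (by positivity) (by norm_num : (0:ℝ) < 2)]
              nlinarith [hnorm_nonneg, hε.le]
      · have h1 : ‖h x‖ ≤ ε / 2 := (hSsmall x hxS).le
        have h2 : δ / (u x + δ) ≤ 1 := by
          rw [div_le_one (hden x)]
          have := hu_nonneg x; linarith
        calc ‖h x‖ * (δ / (u x + δ)) ≤ ‖h x‖ * 1 :=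
              mul_le_mul_of_nonneg_left h2 (norm_nonneg _)
          _ ≤ ε / 2 := by rwa [mul_one]
    calc ‖h - w * g‖ ≤ ε / 2 := by
          rw [← ZeroAtInftyContinuousMap.norm_toBCF_eq_norm]
          exact (BoundedContinuousFunction.norm_le (by linarith)).mpr hbound
      _ < ε := by linarith
  · -- S empty : h is uniformly small, approximate by 0
    refine ⟨0, hzero, ?_⟩
    rw [dist_eq_norm, sub_zero]
    calc ‖h‖ ≤ ε / 2 := by
          rw [← ZeroAtInftyContinuousMap.norm_toBCF_eq_norm]
          exact (BoundedContinuousFunction.norm_le (by linarith)).mpr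
            fun x => (hSsmall x fun hx => hS ⟨x, hx⟩).le
      _ < ε := by linarith
end

section
/- Let G be an additively written abelian group and let Ψ : G × G → 𝕋 be a 2-cocycle on G. Define Ψ⋆(x, y) = conj(Ψ(x, −x − y)) and Ψ̃(x, y) = conj(Ψ(−x, −y)). Then for all x, y, z ∈ G: Ψ⋆(x, y + z) = Ψ̃(y, z) · conj(Ψ̃(x + y, z)) · Ψ⋆(x, y). -/
/-- For a `𝕋`-valued 2-cocycle `Ψ` on an abelian group, with
`Ψ⋆ (x, y) = conj (Ψ (x, -x - y))` and `Ψ̃ (x, y) = conj (Ψ (-x, -y))`,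
one has `Ψ⋆ (x, y + z) = Ψ̃ (y, z) * conj (Ψ̃ (x + y, z)) * Ψ⋆ (x, y)`. -/
theorem star_cocycle_identity
    {G : Type*} [AddCommGroup G]
    (Ψ : G → G → ℂ)
    (hmod : ∀ x y : G, ‖Ψ x y‖ = 1)
    (h0 : ∀ y : G, Ψ 0 y = 1) (h0' : ∀ x : G, Ψ x 0 = 1)
    (hcoc : ∀ x y z : G, Ψ x (y + z) * Ψ y z = Ψ (x + y) z * Ψ x y)
    (Ψs Ψt : G → G → ℂ)
    (hΨs : ∀ x y : G, Ψs x y = (starRingEnd ℂ) (Ψ x (-x - y)))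
    (hΨt : ∀ x y : G, Ψt x y = (starRingEnd ℂ) (Ψ (-x) (-y))) :
    ∀ x y z : G,
      Ψs x (y + z) = Ψt y z * (starRingEnd ℂ) (Ψt (x + y) z) * Ψs x y := by
  intro x y z
  have key := hcoc x (-x - y) (-z)
  have h1 : x + (-x - y) = -y := by abel
  have h2 : (-x - y) + (-z) = -x - (y + z) := by abel
  rw [h1, h2] at key
  have key' := congrArg (starRingEnd ℂ) key
  simp only [map_mul] at key'
  have hb : Ψ (-x - y) (-z) * (starRingEnd ℂ) (Ψ (-x - y) (-z)) = 1 := by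
    rw [Complex.mul_conj]
    norm_cast
    rw [← Complex.sq_norm, hmod]
    norm_num
  have h3 : -(x + y) = -x - y := by abel
  rw [hΨs, hΨs, hΨt, hΨt, h3, Complex.conj_conj]
  linear_combination Ψ (-x - y) (-z) * key' -
    (starRingEnd ℂ) (Ψ x (-x - (y + z))) * hb
end

section
/- Let G be an additively written abelian group and let Ψ : G × G → 𝕋 be a 2-cocycle on G. Define Ψ⋆(x, y) = conj(Ψ(x, −x − y)). Then for all x, y, z ∈ G: conj(Ψ(x, y)) · Ψ⋆(x + y, z) = Ψ⋆(x, z) · Ψ⋆(y, x + z). -/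
/-- For a `𝕋`-valued 2-cocycle `Ψ` on an abelian group, with
`Ψ⋆ (x, y) = conj (Ψ (x, -x - y))`, one has
`conj (Ψ (x, y)) * Ψ⋆ (x + y, z) = Ψ⋆ (x, z) * Ψ⋆ (y, x + z)`. -/
theorem star_cocycle_pentagon_identity
    {G : Type*} [AddCommGroup G]
    (Ψ : G → G → ℂ)
    (hmod : ∀ x y : G, ‖Ψ x y‖ = 1)
    (h0 : ∀ y : G, Ψ 0 y = 1) (h0' : ∀ x : G, Ψ x 0 = 1)
    (hcoc : ∀ x y z : G, Ψ x (y + z) * Ψ y z = Ψ (x + y) z * Ψ x y)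
    (Ψs : G → G → ℂ)
    (hΨs : ∀ x y : G, Ψs x y = (starRingEnd ℂ) (Ψ x (-x - y))) :
    ∀ x y z : G,
      (starRingEnd ℂ) (Ψ x y) * Ψs (x + y) z = Ψs x z * Ψs y (x + z) := by
  intro x y z
  have h := hcoc x y (-x - y - z)
  have e1 : y + (-x - y - z) = -x - z := by abel
  have e2 : -(x + y) - z = -x - y - z := by abel
  have e3 : -y - (x + z) = -x - y - z := by abel
  rw [e1] at h
  rw [hΨs, hΨs, hΨs, e2, e3, ← map_mul, ← map_mul, h, mul_comm]
end
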